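/- Parameters of intermediate flattenings: let Z ⊆ [q] be nonempty and R, C ⊆ [q+2] with Z disjoint from R ∪ C. Then the coefficient tensor 𝒜[Z;R;C] of the intermediate flattening 𝒜[Z; R→C], viewed as a decoupled matrix chaos of order |Z|, satisfies: (i) σ(𝒜[Z;R;C]) = max over partitions R' ⊔ C' = Z of ‖𝒜^{(R∪R')→(C∪C')}‖; (ii) v(𝒜[Z;R;C]) = max over partitions R' ⊔ C' = Z with R' ≠ ∅ of ‖𝒜^{R'→(R∪C∪C')}‖; (iii) r(𝒜[Z;R;C]) = max over pairs R', C' with R' ∪ C' = Z and R' ∩ C' ≠ ∅ of ‖𝒜^{(R∪R')→(C∪C')}‖. -/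

import Mathlib

open MeasureTheory ProbabilityTheory Finset
open scoped ENNReal

noncomputable section

/-- Spectral (ℓ²→ℓ²) operator norm of a real matrix. -/
def specNorm {α β : Type*} [Fintype α] [Fintype β] [DecidableEq β] (M : Matrix α β ℝ) : ℝ :=
  ‖LinearMap.toContinuousLinearMap (Matrix.toEuclideanLin M)‖

/-- Size of the range of coordinate `t` of the coefficient tensor of a matrix chaos of
order `q`: the first `q` coordinates range over `[m]`, coordinate `q+1` over `[d₁]`,
and coordinate `q+2` over `[d₂]`. -/
def cdim (q m d1 d2 : ℕ) (t : Fin (q + 2)) : ℕ :=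
  if (t : ℕ) < q then m else if (t : ℕ) = q then d1 else d2

lemma cdim_lt {q m d1 d2 : ℕ} {t : Fin (q + 2)} (h : (t : ℕ) < q) : cdim q m d1 d2 t = m := by
  simp [cdim, h]

lemma cdim_row (q m d1 d2 : ℕ) : cdim q m d1 d2 ⟨q, by omega⟩ = d1 := by
  simp [cdim]

lemma cdim_col (q m d1 d2 : ℕ) : cdim q m d1 d2 ⟨q + 1, by omega⟩ = d2 := by
  show (if q + 1 < q then m else if q + 1 = q then d1 else d2) = d2
  rw [if_neg (by omega), if_neg (by omega)]

/-- The coefficient tensor of order `q+2` associated to the matrix coefficients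
`A : [m]^q → ℝ^{d₁×d₂}` of a matrix chaos. -/
def coeffTensor {q m d1 d2 : ℕ} (A : (Fin q → Fin m) → Matrix (Fin d1) (Fin d2) ℝ)
    (i : ∀ t : Fin (q + 2), Fin (cdim q m d1 d2 t)) : ℝ :=
  A (fun s => Fin.cast (cdim_lt (by simp)) (i (Fin.castLE (by omega) s)))
    (Fin.cast (cdim_row q m d1 d2) (i ⟨q, by omega⟩))
    (Fin.cast (cdim_col q m d1 d2) (i ⟨q + 1, by omega⟩))

/-- The flattening `𝒜^{R→C}` of a tensor `𝒜` with coordinate index types `κ t`: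
the matrix whose rows are indexed by tuples on `R`, columns by tuples on `C`, with entry
`(r, c)` equal to the sum of the entries of `𝒜` over all full index tuples restricting
to `r` on `R` and to `c` on `C`. -/
def flattenG {n : ℕ} (κ : Fin n → Type) [∀ t, Fintype (κ t)] [∀ t, DecidableEq (κ t)]
    (𝒜 : (∀ t, κ t) → ℝ) (R C : Finset (Fin n)) :
    Matrix (∀ t : {x // x ∈ R}, κ t.1) (∀ t : {x // x ∈ C}, κ t.1) ℝ :=
  Matrix.of fun r c => ∑ i : ∀ t, κ t,
    if (∀ t : {x // x ∈ R}, i t.1 = r t) ∧ (∀ t : {x // x ∈ C}, i t.1 = c t) then 𝒜 i else 0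

/-- The parameter `σ(𝒜)`: the largest spectral norm of a σ-flattening, i.e. a flattening
along a partition `R ⊔ C = [k+2]` keeping the row matrix coordinate `k+1` in `R` and the
column matrix coordinate `k+2` in `C`. -/
def sigmaP {k : ℕ} (κ : Fin (k + 2) → Type) [∀ t, Fintype (κ t)] [∀ t, DecidableEq (κ t)]
    (𝒜 : (∀ t, κ t) → ℝ) : ℝ :=
  sSup {x : ℝ | ∃ R C : Finset (Fin (k + 2)), Disjoint R C ∧ R ∪ C = Finset.univ ∧
    (⟨k, by omega⟩ : Fin (k + 2)) ∈ R ∧ (⟨k + 1, by omega⟩ : Fin (k + 2)) ∈ C ∧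
    x = specNorm (flattenG κ 𝒜 R C)}

/-- The parameter `v(𝒜)`: the largest spectral norm of a v-flattening, i.e. a flattening
along a partition `R ⊔ C = [k+2]` with both matrix coordinates in `C` and `R ≠ ∅`. -/
def vP {k : ℕ} (κ : Fin (k + 2) → Type) [∀ t, Fintype (κ t)] [∀ t, DecidableEq (κ t)]
    (𝒜 : (∀ t, κ t) → ℝ) : ℝ :=
  sSup {x : ℝ | ∃ R C : Finset (Fin (k + 2)), Disjoint R C ∧ R ∪ C = Finset.univ ∧
    (⟨k, by omega⟩ : Fin (k + 2)) ∈ C ∧ (⟨k + 1, by omega⟩ : Fin (k + 2)) ∈ C ∧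
    R.Nonempty ∧ x = specNorm (flattenG κ 𝒜 R C)}

/-- The parameter `r(𝒜)`: the largest spectral norm of an r-flattening, i.e. a flattening
with `R ∪ C = [k+2]`, `k+1 ∈ R`, `k+2 ∈ C` and `∅ ≠ R ∩ C ⊆ [k]`. -/
def rP {k : ℕ} (κ : Fin (k + 2) → Type) [∀ t, Fintype (κ t)] [∀ t, DecidableEq (κ t)]
    (𝒜 : (∀ t, κ t) → ℝ) : ℝ :=
  sSup {x : ℝ | ∃ R C : Finset (Fin (k + 2)), R ∪ C = Finset.univ ∧
    (⟨k, by omega⟩ : Fin (k + 2)) ∈ R ∧ (⟨k + 1, by omega⟩ : Fin (k + 2)) ∈ C ∧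
    (R ∩ C).Nonempty ∧ (∀ t ∈ R ∩ C, (t : ℕ) < k) ∧
    x = specNorm (flattenG κ 𝒜 R C)}

/-- Index types of the coefficient tensor of the intermediate flattening `𝒜[Z; R→C]`,
viewed as a decoupled matrix chaos of order `k = |Z|`: the first `k` coordinates range over
`[m]`, the row matrix coordinate over tuples on `R`, the column matrix coordinate over
tuples on `C`. -/
def interKappa {q : ℕ} (m d1 d2 : ℕ) (R C : Finset (Fin (q + 2))) (k : ℕ)
    (t : Fin (k + 2)) : Type :=
  if (t : ℕ) < k then Fin m
  else if (t : ℕ) = k then (∀ s : {x // x ∈ R}, Fin (cdim q m d1 d2 s.1))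
  else (∀ s : {x // x ∈ C}, Fin (cdim q m d1 d2 s.1))

instance interKappa.instFintype {q : ℕ} (m d1 d2 : ℕ) (R C : Finset (Fin (q + 2))) (k : ℕ)
    (t : Fin (k + 2)) : Fintype (interKappa m d1 d2 R C k t) := by
  unfold interKappa; split_ifs <;> infer_instance

instance interKappa.instDecidableEq {q : ℕ} (m d1 d2 : ℕ) (R C : Finset (Fin (q + 2))) (k : ℕ)
    (t : Fin (k + 2)) : DecidableEq (interKappa m d1 d2 R C k t) := by
  unfold interKappa; split_ifs <;> infer_instance

lemma interKappa_chaos {q : ℕ} (m d1 d2 : ℕ) (R C : Finset (Fin (q + 2))) {k : ℕ}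
    (a : Fin k) : interKappa m d1 d2 R C k (Fin.castLE (by omega) a) = Fin m := by
  simp [interKappa, a.isLt]

lemma interKappa_row {q : ℕ} (m d1 d2 : ℕ) (R C : Finset (Fin (q + 2))) (k : ℕ) :
    interKappa m d1 d2 R C k ⟨k, by omega⟩
      = (∀ s : {x // x ∈ R}, Fin (cdim q m d1 d2 s.1)) := by
  show (if k < k then Fin m else if k = k then _ else _) = _
  rw [if_neg (by omega), if_pos rfl]

lemma interKappa_col {q : ℕ} (m d1 d2 : ℕ) (R C : Finset (Fin (q + 2))) (k : ℕ) :
    interKappa m d1 d2 R C k ⟨k + 1, by omega⟩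
      = (∀ s : {x // x ∈ C}, Fin (cdim q m d1 d2 s.1)) := by
  show (if k + 1 < k then Fin m else if k + 1 = k then _ else _) = _
  rw [if_neg (by omega), if_neg (by omega)]

/-- The coefficient tensor (of order `|Z| + 2`) of the intermediate flattening
`𝒜[Z; R→C]` of a tensor `𝒜`, viewed as a decoupled matrix chaos of order `k = |Z|`:
its entry at a tuple of `k` chaos indices, a row tuple on `R` and a column tuple on `C`
is the sum of `𝒜` over all full index tuples with the prescribed restrictions to
`Z`, `R` and `C`. -/
def interTensor {q : ℕ} (m d1 d2 : ℕ) (𝒜 : (∀ t : Fin (q + 2), Fin (cdim q m d1 d2 t)) → ℝ)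
    (Z R C : Finset (Fin (q + 2))) {k : ℕ} (hk : Z.card = k)
    (j : ∀ t : Fin (k + 2), interKappa m d1 d2 R C k t) : ℝ :=
  ∑ i : ∀ t : Fin (q + 2), Fin (cdim q m d1 d2 t),
    if (∀ a : Fin k, ((i ((Z.orderIsoOfFin hk a) : Fin (q + 2))) : ℕ)
          = ((cast (interKappa_chaos m d1 d2 R C a) (j (Fin.castLE (by omega) a)) : Fin m) : ℕ))
        ∧ (∀ s : {x // x ∈ R},
            i s.1 = (cast (interKappa_row m d1 d2 R C k) (j ⟨k, by omega⟩)) s)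
        ∧ (∀ s : {x // x ∈ C},
            i s.1 = (cast (interKappa_col m d1 d2 R C k) (j ⟨k + 1, by omega⟩)) s)
    then 𝒜 i else 0

section spec
open scoped Matrix

variable {α β α' β' : Type*} [Fintype α] [Fintype β] [Fintype α'] [Fintype β']
  [DecidableEq α] [DecidableEq β] [DecidableEq α'] [DecidableEq β']

private lemma eunorm {γ : Type*} [Fintype γ] (v : EuclideanSpace ℝ γ) :
    ‖v‖ = Real.sqrt (∑ i, (v i)^2) := by
  rw [EuclideanSpace.norm_eq]
  congr 1
  exact Finset.sum_congr rfl fun i _ => by rw [Real.norm_eq_abs, sq_abs]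

private lemma sum_mul_extend (e : β' ↪ β) (g : β → ℝ) (x : β' → ℝ) :
    ∑ b, g b * Function.extend e x 0 b = ∑ b', g (e b') * x b' := by
  have h2 : ∑ b, g b * Function.extend e x 0 b
      = ∑ b ∈ univ.map e, g b * Function.extend e x 0 b := by
    refine (Finset.sum_subset (Finset.subset_univ _) ?_).symm
    intro b _ hb
    have : ¬ ∃ b', e b' = b := by
      rintro ⟨b', rfl⟩; exact hb (Finset.mem_map.mpr ⟨b', Finset.mem_univ _, rfl⟩)
    rw [Function.extend_apply' _ _ _ this]
    simp
  rw [h2, Finset.sum_map]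
  exact Finset.sum_congr rfl fun b' _ => by rw [e.injective.extend_apply]

lemma specNorm_submatrix_of_zero (M : Matrix α β ℝ) (e₁ : α' ↪ α) (e₂ : β' ↪ β)
    (hrow : ∀ a b, (∀ a', e₁ a' ≠ a) → M a b = 0)
    (hcol : ∀ a b, (∀ b', e₂ b' ≠ b) → M a b = 0) :
    specNorm (M.submatrix e₁ e₂) = specNorm M := by
  set N : Matrix α' β' ℝ := M.submatrix e₁ e₂ with hN
  -- key: mulVec of M on extended vector
  have key : ∀ x : β' → ℝ, ∀ a', (M *ᵥ Function.extend e₂ x 0) (e₁ a') = (N *ᵥ x) a' := by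
    intro x a'
    simp only [Matrix.mulVec, dotProduct]
    exact sum_mul_extend e₂ (fun b => M (e₁ a') b) x
  have keyz : ∀ x : β' → ℝ, ∀ a, (∀ a', e₁ a' ≠ a) → (M *ᵥ Function.extend e₂ x 0) a = 0 := by
    intro x a ha
    simp only [Matrix.mulVec, dotProduct]
    exact Finset.sum_eq_zero fun b _ => by
      show M a b * _ = 0
      rw [hrow a b ha, zero_mul]
  have normMext : ∀ x : β' → ℝ,
      ‖Matrix.toEuclideanLin M ((WithLp.equiv 2 _).symm (Function.extend e₂ x 0))‖
        = ‖Matrix.toEuclideanLin N ((WithLp.equiv 2 _).symm x)‖ := by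
    intro x
    rw [eunorm, eunorm]
    congr 1
    have hz : ∀ a ∈ univ, a ∉ univ.map e₁ →
        ((Matrix.toEuclideanLin M ((WithLp.equiv 2 _).symm (Function.extend e₂ x 0))) a)^2 = 0 := by
      intro a _ ha
      have : (∀ a', e₁ a' ≠ a) := by
        intro a' h; exact ha (Finset.mem_map.mpr ⟨a', Finset.mem_univ _, h⟩)
      have h0 : (Matrix.toEuclideanLin M ((WithLp.equiv 2 _).symm (Function.extend e₂ x 0))) a
          = (M *ᵥ Function.extend e₂ x 0) a := rfl
      rw [h0, keyz x a this]; simp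
    rw [← Finset.sum_subset (Finset.subset_univ (univ.map e₁)) hz, Finset.sum_map]
    refine Finset.sum_congr rfl fun a' _ => ?_
    have h0 : (Matrix.toEuclideanLin M ((WithLp.equiv 2 _).symm (Function.extend e₂ x 0))) (e₁ a')
        = (M *ᵥ Function.extend e₂ x 0) (e₁ a') := rfl
    rw [h0, key x a']
    rfl
  have normext : ∀ x : β' → ℝ,
      ‖((WithLp.equiv 2 (β → ℝ)).symm (Function.extend e₂ x 0) : EuclideanSpace ℝ β)‖
        = ‖((WithLp.equiv 2 (β' → ℝ)).symm x : EuclideanSpace ℝ β')‖ := by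
    intro x
    rw [eunorm, eunorm]
    congr 1
    have : ∀ b, (((WithLp.equiv 2 (β → ℝ)).symm (Function.extend e₂ x 0) : EuclideanSpace ℝ β) b)
        = Function.extend e₂ x 0 b := fun _ => rfl
    calc ∑ b, (((WithLp.equiv 2 (β → ℝ)).symm (Function.extend e₂ x 0) : EuclideanSpace ℝ β) b)^2
        = ∑ b, Function.extend e₂ x 0 b * Function.extend e₂ x 0 b := by
          refine Finset.sum_congr rfl fun b _ => by rw [this b, sq]
      _ = ∑ b', Function.extend e₂ x 0 (e₂ b') * x b' := sum_mul_extend e₂ _ x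
      _ = ∑ b', x b' ^ 2 := by
          refine Finset.sum_congr rfl fun b' _ => by rw [e₂.injective.extend_apply, sq]
      _ = _ := rfl
  refine le_antisymm ?_ ?_
  · -- ‖N‖ ≤ ‖M‖
    refine ContinuousLinearMap.opNorm_le_bound _ (norm_nonneg _) fun x => ?_
    have hx : x = (WithLp.equiv 2 (β' → ℝ)).symm (WithLp.equiv 2 (β' → ℝ) x) := rfl
    set x0 : β' → ℝ := WithLp.equiv 2 (β' → ℝ) x with hx0
    have h1 : ‖(LinearMap.toContinuousLinearMap (Matrix.toEuclideanLin N)) x‖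
        = ‖Matrix.toEuclideanLin M ((WithLp.equiv 2 _).symm (Function.extend e₂ x0 0))‖ := by
      rw [normMext x0]; rfl
    rw [h1]
    calc ‖Matrix.toEuclideanLin M ((WithLp.equiv 2 _).symm (Function.extend e₂ x0 0))‖
        ≤ specNorm M * ‖((WithLp.equiv 2 (β → ℝ)).symm (Function.extend e₂ x0 0) : EuclideanSpace ℝ β)‖ :=
          (LinearMap.toContinuousLinearMap (Matrix.toEuclideanLin M)).le_opNorm _
      _ = specNorm M * ‖x‖ := by rw [normext x0]; rfl
  · -- ‖M‖ ≤ ‖N‖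
    refine ContinuousLinearMap.opNorm_le_bound _ (norm_nonneg _) fun y => ?_
    set y0 : β → ℝ := WithLp.equiv 2 (β → ℝ) y with hy0
    set x0 : β' → ℝ := fun b' => y0 (e₂ b') with hx0
    have hsame : M *ᵥ y0 = M *ᵥ Function.extend e₂ x0 0 := by
      funext a
      simp only [Matrix.mulVec, dotProduct]
      refine Finset.sum_congr rfl fun b _ => ?_
      show M a b * y0 b = M a b * Function.extend e₂ x0 0 b
      by_cases hb : ∃ b', e₂ b' = b
      · obtain ⟨b', rfl⟩ := hb
        rw [e₂.injective.extend_apply]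
      · rw [hcol a b (fun b' h => hb ⟨b', h⟩)]; simp
    have h1 : ‖(LinearMap.toContinuousLinearMap (Matrix.toEuclideanLin M)) y‖
        = ‖Matrix.toEuclideanLin N ((WithLp.equiv 2 _).symm x0)‖ := by
      rw [← normMext x0]
      have : Matrix.toEuclideanLin M ((WithLp.equiv 2 _).symm (Function.extend e₂ x0 0))
          = (WithLp.equiv 2 _).symm (M *ᵥ Function.extend e₂ x0 0) := rfl
      rw [this, ← hsame]
      rfl
    rw [h1]
    have h2 : ‖((WithLp.equiv 2 (β' → ℝ)).symm x0 : EuclideanSpace ℝ β')‖ ≤ ‖y‖ := by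
      rw [eunorm, eunorm]
      apply Real.sqrt_le_sqrt
      have : ∑ b', (((WithLp.equiv 2 (β' → ℝ)).symm x0 : EuclideanSpace ℝ β') b')^2
          = ∑ b ∈ univ.map e₂, (y b)^2 := by
        rw [Finset.sum_map]; rfl
      rw [this]
      exact Finset.sum_le_sum_of_subset_of_nonneg (Finset.subset_univ _)
        (fun b _ _ => sq_nonneg _)
    calc ‖Matrix.toEuclideanLin N ((WithLp.equiv 2 _).symm x0)‖
        ≤ specNorm N * ‖((WithLp.equiv 2 (β' → ℝ)).symm x0 : EuclideanSpace ℝ β')‖ :=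
          (LinearMap.toContinuousLinearMap (Matrix.toEuclideanLin N)).le_opNorm _
      _ ≤ specNorm N * ‖y‖ := by
          apply mul_le_mul_of_nonneg_left h2 (norm_nonneg _)

end spec
section helpers

private lemma cast_symm_eq {X Y : Type} (e : X = Y) (x : X) (y : Y) (h : cast e x = y) :
    x = cast e.symm y := by subst e; exact h

end helpers

section inter

variable {q : ℕ} (m d1 d2 : ℕ) (Z R C : Finset (Fin (q + 2))) {k : ℕ} (hk : Z.card = k)

/-- The increasing enumeration of `Z`. -/
def zmap (a : Fin k) : Fin (q + 2) := (Z.orderIsoOfFin hk a : Fin (q + 2))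

lemma zmap_mem (a : Fin k) : zmap Z hk a ∈ Z := (Z.orderIsoOfFin hk a).2

lemma zmap_inj : Function.Injective (zmap Z hk) := fun a b h =>
  (Z.orderIsoOfFin hk).injective (Subtype.ext h)

lemma zmap_symm {t : Fin (q + 2)} (ht : t ∈ Z) :
    zmap Z hk ((Z.orderIsoOfFin hk).symm ⟨t, ht⟩) = t := by
  unfold zmap
  rw [OrderIso.apply_symm_apply]

variable (hZq : ∀ t ∈ Z, (t : ℕ) < q)

include hZq in
lemma cdim_zmap (a : Fin k) : cdim q m d1 d2 (zmap Z hk a) = m :=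
  cdim_lt (hZq _ (zmap_mem Z hk a))

/-- The full index tuple `j` determined by a full original index tuple `i`. -/
def jfun (hZq : ∀ t ∈ Z, (t : ℕ) < q) (i : ∀ t : Fin (q + 2), Fin (cdim q m d1 d2 t))
    (t : Fin (k + 2)) : interKappa m d1 d2 R C k t :=
  if h : (t : ℕ) < k then
    cast (interKappa_chaos m d1 d2 R C ⟨t.1, h⟩).symm
      (Fin.cast (cdim_zmap m d1 d2 Z hk hZq ⟨t.1, h⟩) (i (zmap Z hk ⟨t.1, h⟩)))
  else if h2 : (t : ℕ) = k then
    cast (show (∀ s : {x // x ∈ R}, Fin (cdim q m d1 d2 s.1)) = interKappa m d1 d2 R C k t by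
        rw [show t = ⟨k, by omega⟩ from Fin.ext h2]; exact (interKappa_row m d1 d2 R C k).symm)
      (fun s : {x // x ∈ R} => i s.1)
  else
    cast (show (∀ s : {x // x ∈ C}, Fin (cdim q m d1 d2 s.1)) = interKappa m d1 d2 R C k t by
        rw [show t = ⟨k + 1, by omega⟩ from
          Fin.ext ((by have := t.isLt; omega : (t : ℕ) = k + 1))];
        exact (interKappa_col m d1 d2 R C k).symm)
      (fun s : {x // x ∈ C} => i s.1)

lemma jfun_chaos (i : ∀ t : Fin (q + 2), Fin (cdim q m d1 d2 t)) (a : Fin k) :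
    jfun m d1 d2 Z R C hk hZq i (Fin.castLE (by omega) a)
      = cast (interKappa_chaos m d1 d2 R C a).symm
          (Fin.cast (cdim_zmap m d1 d2 Z hk hZq a) (i (zmap Z hk a))) := by
  unfold jfun
  exact dif_pos a.2

lemma jfun_row (i : ∀ t : Fin (q + 2), Fin (cdim q m d1 d2 t)) :
    jfun m d1 d2 Z R C hk hZq i ⟨k, by omega⟩
      = cast (interKappa_row m d1 d2 R C k).symm (fun s : {x // x ∈ R} => i s.1) := by
  unfold jfun
  rw [dif_neg (show ¬ ((⟨k, by omega⟩ : Fin (k + 2)) : ℕ) < k from lt_irrefl k),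
    dif_pos rfl]

lemma jfun_col (i : ∀ t : Fin (q + 2), Fin (cdim q m d1 d2 t)) :
    jfun m d1 d2 Z R C hk hZq i ⟨k + 1, by omega⟩
      = cast (interKappa_col m d1 d2 R C k).symm (fun s : {x // x ∈ C} => i s.1) := by
  unfold jfun
  rw [dif_neg (show ¬ ((⟨k + 1, by omega⟩ : Fin (k + 2)) : ℕ) < k from (by omega : ¬ (k + 1 < k))),
    dif_neg (show ¬ ((⟨k + 1, by omega⟩ : Fin (k + 2)) : ℕ) = k from (by omega : ¬ (k + 1 = k)))]

include hZq in
/-- The condition in `interTensor` says exactly `j = jfun i`. -/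
lemma interCond_iff (i : ∀ t : Fin (q + 2), Fin (cdim q m d1 d2 t))
    (j : ∀ t : Fin (k + 2), interKappa m d1 d2 R C k t) :
    ((∀ a : Fin k, ((i ((Z.orderIsoOfFin hk a) : Fin (q + 2))) : ℕ)
          = ((cast (interKappa_chaos m d1 d2 R C a) (j (Fin.castLE (by omega) a)) : Fin m) : ℕ))
        ∧ (∀ s : {x // x ∈ R},
            i s.1 = (cast (interKappa_row m d1 d2 R C k) (j ⟨k, by omega⟩)) s)
        ∧ (∀ s : {x // x ∈ C},
            i s.1 = (cast (interKappa_col m d1 d2 R C k) (j ⟨k + 1, by omega⟩)) s))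
      ↔ j = jfun m d1 d2 Z R C hk hZq i := by
  constructor
  · rintro ⟨h1, h2, h3⟩
    funext t
    obtain ⟨tv, tlt⟩ := t
    by_cases ht : tv < k
    · refine Eq.trans ?_ (jfun_chaos m d1 d2 Z R C hk hZq i ⟨tv, ht⟩).symm
      exact cast_symm_eq (interKappa_chaos m d1 d2 R C ⟨tv, ht⟩) _ _
        (Fin.ext ((h1 ⟨tv, ht⟩).symm))
    · by_cases ht2 : tv = k
      · subst ht2
        refine Eq.trans ?_ (jfun_row m d1 d2 Z R C hk hZq i).symm
        exact cast_symm_eq (interKappa_row m d1 d2 R C _) _ _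
          (funext fun s => (h2 s).symm)
      · have ht3 : tv = k + 1 := by omega
        subst ht3
        refine Eq.trans ?_ (jfun_col m d1 d2 Z R C hk hZq i).symm
        exact cast_symm_eq (interKappa_col m d1 d2 R C _) _ _
          (funext fun s => (h3 s).symm)
  · rintro rfl
    refine ⟨fun a => ?_, fun s => ?_, fun s => ?_⟩
    · rw [jfun_chaos, cast_cast]; exact rfl
    · rw [jfun_row, cast_cast]; exact rfl
    · rw [jfun_col, cast_cast]; exact rfl

end inter
section entry

private lemma sum_ite_and_eq {ι : Type} [Fintype ι] [DecidableEq ι] (P : ι → Prop)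
    [DecidablePred P] (j₀ : ι) (v : ℝ) :
    ∑ j, (if P j ∧ j = j₀ then v else 0) = if P j₀ then v else 0 := by
  have h : ∀ j, (if P j ∧ j = j₀ then v else 0)
      = if j = j₀ then (if P j then v else 0) else 0 := by
    intro j
    by_cases hj : j = j₀ <;> by_cases hp : P j <;> simp [hj, hp]
  rw [Finset.sum_congr rfl fun j _ => h j, Finset.sum_ite_eq' Finset.univ j₀
    (fun j => if P j then v else 0)]
  simp

variable {q : ℕ} (m d1 d2 : ℕ) (Z R C : Finset (Fin (q + 2))) {k : ℕ} (hk : Z.card = k)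
  (hZq : ∀ t ∈ Z, (t : ℕ) < q)

include hZq in
lemma flatten_inter_entry (𝒜 : (∀ t : Fin (q + 2), Fin (cdim q m d1 d2 t)) → ℝ)
    (Rt Ct : Finset (Fin (k + 2)))
    (r : ∀ t : {x // x ∈ Rt}, interKappa m d1 d2 R C k t.1)
    (c : ∀ t : {x // x ∈ Ct}, interKappa m d1 d2 R C k t.1) :
    flattenG (interKappa m d1 d2 R C k) (interTensor m d1 d2 𝒜 Z R C hk) Rt Ct r c
      = ∑ i : ∀ t : Fin (q + 2), Fin (cdim q m d1 d2 t),
          if ((∀ t : {x // x ∈ Rt}, jfun m d1 d2 Z R C hk hZq i t.1 = r t)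
              ∧ (∀ t : {x // x ∈ Ct}, jfun m d1 d2 Z R C hk hZq i t.1 = c t))
          then 𝒜 i else 0 := by
  have step1 : ∀ j : (∀ t : Fin (k + 2), interKappa m d1 d2 R C k t),
      (if (∀ t : {x // x ∈ Rt}, j t.1 = r t) ∧ (∀ t : {x // x ∈ Ct}, j t.1 = c t)
        then interTensor m d1 d2 𝒜 Z R C hk j else 0)
      = ∑ i : ∀ t : Fin (q + 2), Fin (cdim q m d1 d2 t),
          if ((∀ t : {x // x ∈ Rt}, j t.1 = r t) ∧ (∀ t : {x // x ∈ Ct}, j t.1 = c t))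
              ∧ j = jfun m d1 d2 Z R C hk hZq i
          then 𝒜 i else 0 := by
    intro j
    by_cases hA : (∀ t : {x // x ∈ Rt}, j t.1 = r t) ∧ (∀ t : {x // x ∈ Ct}, j t.1 = c t)
    · rw [if_pos hA]
      unfold interTensor
      simp only [interCond_iff m d1 d2 Z R C hk hZq]
      refine Finset.sum_congr rfl fun i _ => ?_
      by_cases hB : j = jfun m d1 d2 Z R C hk hZq i
      · rw [if_pos hB, if_pos ⟨hA, hB⟩]
      · rw [if_neg hB, if_neg (fun hc => hB hc.2)]
    · rw [if_neg hA]
      symm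
      exact Finset.sum_eq_zero fun i _ => if_neg (fun hc => hA hc.1)
  show (∑ j : ∀ t : Fin (k + 2), interKappa m d1 d2 R C k t,
      if (∀ t : {x // x ∈ Rt}, j t.1 = r t) ∧ (∀ t : {x // x ∈ Ct}, j t.1 = c t)
      then interTensor m d1 d2 𝒜 Z R C hk j else 0) = _
  rw [Finset.sum_congr rfl fun j _ => step1 j, Finset.sum_comm]
  refine Finset.sum_congr rfl fun i _ => ?_
  exact sum_ite_and_eq
    (fun j => (∀ t : {x // x ∈ Rt}, j t.1 = r t) ∧ (∀ t : {x // x ∈ Ct}, j t.1 = c t))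
    (jfun m d1 d2 Z R C hk hZq i) (𝒜 i)

end entry
section tset

private lemma cast_inj2 {X Y : Type} (e e' : X = Y) {x y : X} (h : cast e x = cast e' y) :
    x = y := by subst e; exact h

private lemma cast_fin_inj {X : Type} {n n' : ℕ} (e e' : Fin n = X) (p p' : n' = n)
    {x y : Fin n'} (h : cast e (Fin.cast p x) = cast e' (Fin.cast p' y)) : x = y := by
  subst e
  have h2 := congrArg Fin.val h
  exact Fin.ext h2

def muF (k : ℕ) : Fin (k + 2) := ⟨k, by omega⟩
def nuF (k : ℕ) : Fin (k + 2) := ⟨k + 1, by omega⟩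

variable {q : ℕ} (m d1 d2 : ℕ) (Z R C : Finset (Fin (q + 2))) {k : ℕ} (hk : Z.card = k)
  (hZq : ∀ t ∈ Z, (t : ℕ) < q)

def primSet (St : Finset (Fin (k + 2))) : Finset (Fin (q + 2)) :=
  (Finset.univ.filter fun a : Fin k => Fin.castLE (by omega) a ∈ St).image (zmap Z hk)

def TSet (St : Finset (Fin (k + 2))) : Finset (Fin (q + 2)) :=
  primSet Z hk St ∪ ((if muF k ∈ St then R else ∅) ∪ (if nuF k ∈ St then C else ∅))

lemma mem_primSet {St : Finset (Fin (k + 2))} {t : Fin (q + 2)} :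
    t ∈ primSet Z hk St ↔ ∃ a : Fin k, Fin.castLE (by omega) a ∈ St ∧ zmap Z hk a = t := by
  simp [primSet]

lemma mem_TSet_z {St : Finset (Fin (k + 2))} (a : Fin k)
    (ha : Fin.castLE (by omega) a ∈ St) : zmap Z hk a ∈ TSet Z R C hk St :=
  Finset.mem_union_left _ ((mem_primSet Z hk).mpr ⟨a, ha, rfl⟩)

lemma mem_TSet_R {St : Finset (Fin (k + 2))} (hmu : muF k ∈ St) {s : Fin (q + 2)}
    (hs : s ∈ R) : s ∈ TSet Z R C hk St :=
  Finset.mem_union_right _ (Finset.mem_union_left _ (by rw [if_pos hmu]; exact hs))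

lemma mem_TSet_C {St : Finset (Fin (k + 2))} (hnu : nuF k ∈ St) {s : Fin (q + 2)}
    (hs : s ∈ C) : s ∈ TSet Z R C hk St :=
  Finset.mem_union_right _ (Finset.mem_union_right _ (by rw [if_pos hnu]; exact hs))

/-- Transport of a tuple on `TSet St` to a tuple on `St` for the intermediate tensor. -/
def toInter (St : Finset (Fin (k + 2)))
    (h : ∀ t : {x // x ∈ TSet Z R C hk St}, Fin (cdim q m d1 d2 t.1))
    (t : {x // x ∈ St}) : interKappa m d1 d2 R C k t.1 :=
  if hlt : (t.1 : ℕ) < k then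
    cast (interKappa_chaos m d1 d2 R C ⟨t.1.1, hlt⟩).symm
      (Fin.cast (cdim_zmap m d1 d2 Z hk hZq ⟨t.1.1, hlt⟩)
        (h ⟨zmap Z hk ⟨t.1.1, hlt⟩, mem_TSet_z Z R C hk ⟨t.1.1, hlt⟩ t.2⟩))
  else if h2 : (t.1 : ℕ) = k then
    cast (show (∀ s : {x // x ∈ R}, Fin (cdim q m d1 d2 s.1))
          = interKappa m d1 d2 R C k t.1 by
        rw [show t.1 = muF k from Fin.ext h2]; exact (interKappa_row m d1 d2 R C k).symm)
      (fun s : {x // x ∈ R} =>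
        h ⟨s.1, mem_TSet_R Z R C hk ((Fin.ext h2 : t.1 = muF k) ▸ t.2) s.2⟩)
  else
    cast (show (∀ s : {x // x ∈ C}, Fin (cdim q m d1 d2 s.1))
          = interKappa m d1 d2 R C k t.1 by
        rw [show t.1 = nuF k from Fin.ext ((by have := t.1.isLt; omega : (t.1 : ℕ) = k + 1))];
        exact (interKappa_col m d1 d2 R C k).symm)
      (fun s : {x // x ∈ C} =>
        h ⟨s.1, mem_TSet_C Z R C hk
          ((Fin.ext ((by have := t.1.isLt; omega : (t.1 : ℕ) = k + 1)) : t.1 = nuF k) ▸ t.2)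
          s.2⟩)

lemma toInter_chaos (St : Finset (Fin (k + 2)))
    (h : ∀ t : {x // x ∈ TSet Z R C hk St}, Fin (cdim q m d1 d2 t.1))
    (a : Fin k) (ha : Fin.castLE (by omega) a ∈ St) :
    toInter m d1 d2 Z R C hk hZq St h ⟨Fin.castLE (by omega) a, ha⟩
      = cast (interKappa_chaos m d1 d2 R C a).symm
          (Fin.cast (cdim_zmap m d1 d2 Z hk hZq a)
            (h ⟨zmap Z hk a, mem_TSet_z Z R C hk a ha⟩)) := by
  unfold toInter
  exact dif_pos a.2

lemma toInter_row (St : Finset (Fin (k + 2)))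
    (h : ∀ t : {x // x ∈ TSet Z R C hk St}, Fin (cdim q m d1 d2 t.1))
    (hmu : muF k ∈ St) :
    toInter m d1 d2 Z R C hk hZq St h ⟨muF k, hmu⟩
      = cast (interKappa_row m d1 d2 R C k).symm
          (fun s : {x // x ∈ R} => h ⟨s.1, mem_TSet_R Z R C hk hmu s.2⟩) := by
  unfold toInter
  rw [dif_neg (show ¬ (((⟨muF k, hmu⟩ : {x // x ∈ St}).1 : ℕ) < k) from lt_irrefl k),
    dif_pos (show (((⟨muF k, hmu⟩ : {x // x ∈ St}).1 : ℕ) = k) from rfl)]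
  rfl

lemma toInter_col (St : Finset (Fin (k + 2)))
    (h : ∀ t : {x // x ∈ TSet Z R C hk St}, Fin (cdim q m d1 d2 t.1))
    (hnu : nuF k ∈ St) :
    toInter m d1 d2 Z R C hk hZq St h ⟨nuF k, hnu⟩
      = cast (interKappa_col m d1 d2 R C k).symm
          (fun s : {x // x ∈ C} => h ⟨s.1, mem_TSet_C Z R C hk hnu s.2⟩) := by
  unfold toInter
  rw [dif_neg (show ¬ (((⟨nuF k, hnu⟩ : {x // x ∈ St}).1 : ℕ) < k) from (by omega : ¬ (k + 1 < k))),
    dif_neg (show ¬ (((⟨nuF k, hnu⟩ : {x // x ∈ St}).1 : ℕ) = k) from (by omega : ¬ (k + 1 = k)))]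
  rfl

lemma cond_equiv (St : Finset (Fin (k + 2))) (i : ∀ t : Fin (q + 2), Fin (cdim q m d1 d2 t))
    (h : ∀ t : {x // x ∈ TSet Z R C hk St}, Fin (cdim q m d1 d2 t.1)) :
    (∀ t : {x // x ∈ St},
        jfun m d1 d2 Z R C hk hZq i t.1 = toInter m d1 d2 Z R C hk hZq St h t)
      ↔ (∀ t : {x // x ∈ TSet Z R C hk St}, i t.1 = h t) := by
  constructor
  · intro H t
    obtain ⟨t1, ht⟩ := t
    rcases Finset.mem_union.mp ht with hp | hrc
    · obtain ⟨a, ha, hza⟩ := (mem_primSet Z hk).mp hp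
      have h1 := H ⟨Fin.castLE (by omega) a, ha⟩
      rw [jfun_chaos, toInter_chaos] at h1
      have h2 := cast_fin_inj _ _ _ _ h1
      subst hza
      exact h2
    · rcases Finset.mem_union.mp hrc with hR | hC
      · by_cases hmu : muF k ∈ St
        · rw [if_pos hmu] at hR
          have h1 : jfun m d1 d2 Z R C hk hZq i ⟨k, by omega⟩
              = toInter m d1 d2 Z R C hk hZq St h ⟨muF k, hmu⟩ := H ⟨muF k, hmu⟩
          rw [jfun_row, toInter_row] at h1
          exact congrFun (cast_inj2 _ _ h1) ⟨t1, hR⟩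
        · rw [if_neg hmu] at hR
          exact absurd hR (Finset.notMem_empty _)
      · by_cases hnu : nuF k ∈ St
        · rw [if_pos hnu] at hC
          have h1 : jfun m d1 d2 Z R C hk hZq i ⟨k + 1, by omega⟩
              = toInter m d1 d2 Z R C hk hZq St h ⟨nuF k, hnu⟩ := H ⟨nuF k, hnu⟩
          rw [jfun_col, toInter_col] at h1
          exact congrFun (cast_inj2 _ _ h1) ⟨t1, hC⟩
        · rw [if_neg hnu] at hC
          exact absurd hC (Finset.notMem_empty _)
  · intro H t
    obtain ⟨⟨tv, tlt⟩, ht⟩ := t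
    by_cases hlt : tv < k
    · show jfun m d1 d2 Z R C hk hZq i (Fin.castLE (by omega) (⟨tv, hlt⟩ : Fin k))
        = toInter m d1 d2 Z R C hk hZq St h ⟨Fin.castLE (by omega) (⟨tv, hlt⟩ : Fin k), ht⟩
      rw [jfun_chaos, toInter_chaos]
      exact congrArg (fun v => cast (interKappa_chaos m d1 d2 R C ⟨tv, hlt⟩).symm
          (Fin.cast (cdim_zmap m d1 d2 Z hk hZq ⟨tv, hlt⟩) v))
        (H ⟨zmap Z hk ⟨tv, hlt⟩, mem_TSet_z Z R C hk ⟨tv, hlt⟩ ht⟩)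
    · by_cases h2 : tv = k
      · subst h2
        refine (jfun_row m d1 d2 Z R C hk hZq i).trans
          (Eq.trans ?_ (toInter_row m d1 d2 Z R C hk hZq St h (show muF _ ∈ St from ht)).symm)
        exact congrArg (cast (interKappa_row m d1 d2 R C _).symm)
          (funext fun s => H ⟨s.1, mem_TSet_R Z R C hk (show muF _ ∈ St from ht) s.2⟩)
      · have h3 : tv = k + 1 := by omega
        subst h3
        refine (jfun_col m d1 d2 Z R C hk hZq i).trans
          (Eq.trans ?_ (toInter_col m d1 d2 Z R C hk hZq St h (show nuF k ∈ St from ht)).symm)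
        exact congrArg (cast (interKappa_col m d1 d2 R C k).symm)
          (funext fun s => H ⟨s.1, mem_TSet_C Z R C hk (show nuF k ∈ St from ht) s.2⟩)

lemma jfun_toInter_restrict (St : Finset (Fin (k + 2)))
    (i : ∀ t : Fin (q + 2), Fin (cdim q m d1 d2 t)) :
    (fun t : {x // x ∈ St} => jfun m d1 d2 Z R C hk hZq i t.1)
      = toInter m d1 d2 Z R C hk hZq St (fun s => i s.1) :=
  funext fun t => (cond_equiv m d1 d2 Z R C hk hZq St i (fun s => i s.1)).mpr (fun _ => rfl) t

lemma toInter_inj (St : Finset (Fin (k + 2))) (hpos : ∀ t, 0 < cdim q m d1 d2 t) :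
    Function.Injective (toInter m d1 d2 Z R C hk hZq St) := by
  intro h h' e
  set i : ∀ t : Fin (q + 2), Fin (cdim q m d1 d2 t) :=
    fun t => if ht : t ∈ TSet Z R C hk St then h ⟨t, ht⟩ else ⟨0, hpos t⟩ with hi_def
  have hi : ∀ t : {x // x ∈ TSet Z R C hk St}, i t.1 = h t := fun t => dif_pos t.2
  have H1 := (cond_equiv m d1 d2 Z R C hk hZq St i h).mpr hi
  have H2 : ∀ t : {x // x ∈ St},
      jfun m d1 d2 Z R C hk hZq i t.1 = toInter m d1 d2 Z R C hk hZq St h' t :=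
    fun t => (H1 t).trans (congrFun e t)
  have hi' := (cond_equiv m d1 d2 Z R C hk hZq St i h').mp H2
  funext t
  rw [← hi t, hi' t]

include hZq in
lemma master_norm (hpos : ∀ t, 0 < cdim q m d1 d2 t)
    (𝒜 : (∀ t : Fin (q + 2), Fin (cdim q m d1 d2 t)) → ℝ)
    (Rt Ct : Finset (Fin (k + 2))) :
    specNorm (flattenG (interKappa m d1 d2 R C k) (interTensor m d1 d2 𝒜 Z R C hk) Rt Ct)
      = specNorm (flattenG (fun t => Fin (cdim q m d1 d2 t)) 𝒜
          (TSet Z R C hk Rt) (TSet Z R C hk Ct)) := by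
  set M := flattenG (interKappa m d1 d2 R C k) (interTensor m d1 d2 𝒜 Z R C hk) Rt Ct with hM
  set eR : (∀ t : {x // x ∈ TSet Z R C hk Rt}, Fin (cdim q m d1 d2 t.1))
      ↪ (∀ t : {x // x ∈ Rt}, interKappa m d1 d2 R C k t.1) :=
    ⟨toInter m d1 d2 Z R C hk hZq Rt, toInter_inj m d1 d2 Z R C hk hZq Rt hpos⟩ with heR
  set eC : (∀ t : {x // x ∈ TSet Z R C hk Ct}, Fin (cdim q m d1 d2 t.1))
      ↪ (∀ t : {x // x ∈ Ct}, interKappa m d1 d2 R C k t.1) :=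
    ⟨toInter m d1 d2 Z R C hk hZq Ct, toInter_inj m d1 d2 Z R C hk hZq Ct hpos⟩ with heC
  have hrow : ∀ a b, (∀ a', eR a' ≠ a) → M a b = 0 := by
    intro a b hno
    rw [hM, flatten_inter_entry m d1 d2 Z R C hk hZq]
    refine Finset.sum_eq_zero fun i _ => if_neg ?_
    rintro ⟨h1, _⟩
    exact hno (fun s => i s.1)
      (((jfun_toInter_restrict m d1 d2 Z R C hk hZq Rt i).symm).trans
        (funext fun t => h1 t))
  have hcol : ∀ a b, (∀ b', eC b' ≠ b) → M a b = 0 := by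
    intro a b hno
    rw [hM, flatten_inter_entry m d1 d2 Z R C hk hZq]
    refine Finset.sum_eq_zero fun i _ => if_neg ?_
    rintro ⟨_, h2⟩
    exact hno (fun s => i s.1)
      (((jfun_toInter_restrict m d1 d2 Z R C hk hZq Ct i).symm).trans
        (funext fun t => h2 t))
  have hsub : M.submatrix eR eC
      = flattenG (fun t => Fin (cdim q m d1 d2 t)) 𝒜 (TSet Z R C hk Rt) (TSet Z R C hk Ct) := by
    funext ρ γ
    show M (eR ρ) (eC γ) = _
    rw [hM, flatten_inter_entry m d1 d2 Z R C hk hZq]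
    show _ = ∑ i : ∀ t : Fin (q + 2), Fin (cdim q m d1 d2 t),
      if (∀ t : {x // x ∈ TSet Z R C hk Rt}, i t.1 = ρ t)
          ∧ (∀ t : {x // x ∈ TSet Z R C hk Ct}, i t.1 = γ t) then 𝒜 i else 0
    refine Finset.sum_congr rfl fun i _ => ?_
    refine if_congr (and_congr ?_ ?_) rfl rfl
    · exact cond_equiv m d1 d2 Z R C hk hZq Rt i ρ
    · exact cond_equiv m d1 d2 Z R C hk hZq Ct i γ
  rw [← hsub]
  exact (specNorm_submatrix_of_zero M eR eC
    (fun a b h => hrow a b (fun a' he => h a' he))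
    (fun a b h => hcol a b (fun b' he => h b' he))).symm

end tset
section comb

variable {q : ℕ} (m d1 d2 : ℕ) (Z R C : Finset (Fin (q + 2))) {k : ℕ} (hk : Z.card = k)
  (hZq : ∀ t ∈ Z, (t : ℕ) < q)

def preim (S : Finset (Fin (q + 2))) : Finset (Fin (k + 2)) :=
  (Finset.univ.filter fun a : Fin k => zmap Z hk a ∈ S).image (Fin.castLE (by omega))

lemma mem_preim {S : Finset (Fin (q + 2))} {b : Fin (k + 2)} :
    b ∈ preim Z hk S ↔ ∃ a : Fin k, zmap Z hk a ∈ S ∧ Fin.castLE (by omega) a = b := by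
  simp [preim]

lemma preim_lt {S : Finset (Fin (q + 2))} {b : Fin (k + 2)} (hb : b ∈ preim Z hk S) :
    (b : ℕ) < k := by
  obtain ⟨a, -, rfl⟩ := (mem_preim Z hk).mp hb
  exact a.2

lemma castLE_mem_preim {S : Finset (Fin (q + 2))} (a : Fin k) :
    Fin.castLE (by omega) a ∈ preim Z hk S ↔ zmap Z hk a ∈ S := by
  rw [mem_preim]
  constructor
  · rintro ⟨a', h, ha⟩
    have h2 := congrArg Fin.val ha
    have h3 : (a' : ℕ) = (a : ℕ) := h2
    exact (Fin.ext h3 : a' = a) ▸ h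
  · intro h; exact ⟨a, h, rfl⟩

lemma primSet_union (St St' : Finset (Fin (k + 2))) :
    primSet Z hk (St ∪ St') = primSet Z hk St ∪ primSet Z hk St' := by
  ext t
  simp only [mem_primSet, Finset.mem_union]
  constructor
  · rintro ⟨a, ha | ha, rfl⟩
    exacts [Or.inl ⟨a, ha, rfl⟩, Or.inr ⟨a, ha, rfl⟩]
  · rintro (⟨a, ha, rfl⟩ | ⟨a, ha, rfl⟩)
    exacts [⟨a, Or.inl ha, rfl⟩, ⟨a, Or.inr ha, rfl⟩]

lemma primSet_univ : primSet Z hk Finset.univ = Z := by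
  ext t
  simp only [mem_primSet]
  constructor
  · rintro ⟨a, -, rfl⟩; exact zmap_mem Z hk a
  · intro ht
    exact ⟨(Z.orderIsoOfFin hk).symm ⟨t, ht⟩, Finset.mem_univ _, zmap_symm Z hk ht⟩

lemma primSet_mu : primSet Z hk ({muF k} : Finset (Fin (k + 2))) = ∅ := by
  ext t
  simp only [mem_primSet, Finset.mem_singleton, Finset.notMem_empty, iff_false]
  rintro ⟨a, ha, rfl⟩
  have h2 := congrArg Fin.val ha
  have h2' : (a : ℕ) = k := h2
  have h3 := a.2
  omega

lemma primSet_nu : primSet Z hk ({nuF k} : Finset (Fin (k + 2))) = ∅ := by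
  ext t
  simp only [mem_primSet, Finset.mem_singleton, Finset.notMem_empty, iff_false]
  rintro ⟨a, ha, rfl⟩
  have h2 := congrArg Fin.val ha
  have h2' : (a : ℕ) = k + 1 := h2
  have h3 := a.2
  omega

lemma primSet_preim {S : Finset (Fin (q + 2))} (hS : S ⊆ Z) :
    primSet Z hk (preim Z hk S) = S := by
  ext t
  rw [mem_primSet]
  constructor
  · rintro ⟨a, ha, rfl⟩
    exact (castLE_mem_preim Z hk a).mp ha
  · intro ht
    refine ⟨(Z.orderIsoOfFin hk).symm ⟨t, hS ht⟩, ?_, zmap_symm Z hk (hS ht)⟩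
    rw [castLE_mem_preim, zmap_symm Z hk (hS ht)]
    exact ht

lemma primSet_disjoint {St St' : Finset (Fin (k + 2))} (h : Disjoint St St') :
    Disjoint (primSet Z hk St) (primSet Z hk St') := by
  rw [Finset.disjoint_left]
  rintro t h1 h2
  obtain ⟨a, ha, rfl⟩ := (mem_primSet Z hk).mp h1
  obtain ⟨a', ha', he⟩ := (mem_primSet Z hk).mp h2
  have h3 : a' = a := zmap_inj Z hk he
  subst h3
  exact (Finset.disjoint_left.mp h ha) ha'

lemma TSet_mu_only {St : Finset (Fin (k + 2))} (hmu : muF k ∈ St) (hnu : nuF k ∉ St) :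
    TSet Z R C hk St = R ∪ primSet Z hk St := by
  unfold TSet
  rw [if_pos hmu, if_neg hnu, Finset.union_empty, Finset.union_comm]

lemma TSet_nu_only {St : Finset (Fin (k + 2))} (hmu : muF k ∉ St) (hnu : nuF k ∈ St) :
    TSet Z R C hk St = C ∪ primSet Z hk St := by
  unfold TSet
  rw [if_neg hmu, if_pos hnu, Finset.empty_union, Finset.union_comm]

lemma TSet_none {St : Finset (Fin (k + 2))} (hmu : muF k ∉ St) (hnu : nuF k ∉ St) :
    TSet Z R C hk St = primSet Z hk St := by
  unfold TSet
  rw [if_neg hmu, if_neg hnu, Finset.empty_union, Finset.union_empty]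

lemma TSet_both {St : Finset (Fin (k + 2))} (hmu : muF k ∈ St) (hnu : nuF k ∈ St) :
    TSet Z R C hk St = R ∪ C ∪ primSet Z hk St := by
  unfold TSet
  rw [if_pos hmu, if_pos hnu, Finset.union_comm]

lemma nu_not_mem_mu_preim (S : Finset (Fin (q + 2))) :
    nuF k ∉ ({muF k} : Finset (Fin (k + 2))) ∪ preim Z hk S := by
  intro h
  rcases Finset.mem_union.mp h with h1 | h1
  · have h2 := congrArg Fin.val (Finset.mem_singleton.mp h1)
    have h2' : (k + 1 : ℕ) = k := h2
    omega
  · exact absurd (preim_lt Z hk h1) ((by omega : ¬ (k + 1 < k)))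

lemma mu_not_mem_nu_preim (S : Finset (Fin (q + 2))) :
    muF k ∉ ({nuF k} : Finset (Fin (k + 2))) ∪ preim Z hk S := by
  intro h
  rcases Finset.mem_union.mp h with h1 | h1
  · have h2 := congrArg Fin.val (Finset.mem_singleton.mp h1)
    have h2' : (k : ℕ) = k + 1 := h2
    omega
  · exact absurd (preim_lt Z hk h1) ((by omega : ¬ (k < k)))

end comb
section cover

variable {q : ℕ} (Z : Finset (Fin (q + 2))) {k : ℕ} (hk : Z.card = k)

lemma cover_univ {R' C' : Finset (Fin (q + 2))} (hunion : R' ∪ C' = Z)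
    (A B : Finset (Fin (k + 2))) (hA : preim Z hk R' ⊆ A) (hB : preim Z hk C' ⊆ B)
    (hmu : muF k ∈ A ∪ B) (hnu : nuF k ∈ A ∪ B) : A ∪ B = Finset.univ := by
  apply Finset.eq_univ_of_forall
  intro t
  obtain ⟨tv, tlt⟩ := t
  by_cases h1 : tv < k
  · have hz : zmap Z hk ⟨tv, h1⟩ ∈ R' ∪ C' := by
      rw [hunion]; exact zmap_mem Z hk ⟨tv, h1⟩
    rcases Finset.mem_union.mp hz with h2 | h2
    · exact Finset.mem_union.mpr (Or.inl (hA ((castLE_mem_preim Z hk ⟨tv, h1⟩).mpr h2)))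
    · exact Finset.mem_union.mpr (Or.inr (hB ((castLE_mem_preim Z hk ⟨tv, h1⟩).mpr h2)))
  · by_cases h2 : tv = k
    · have h3 : (⟨tv, tlt⟩ : Fin (k + 2)) = muF k := Fin.ext h2
      rw [h3]; exact hmu
    · have h3 : (⟨tv, tlt⟩ : Fin (k + 2)) = nuF k := Fin.ext ((by omega : tv = k + 1))
      rw [h3]; exact hnu

end cover

/-- chaos parameters of intermediate flattenings. -/
theorem intermediate_flattening_params (q m d1 d2 : ℕ) (hq : 0 < q) (hm : 0 < m)
    (hd1 : 0 < d1) (hd2 : 0 < d2)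
    (A : (Fin q → Fin m) → Matrix (Fin d1) (Fin d2) ℝ)
    (Z R C : Finset (Fin (q + 2))) (hZq : ∀ t ∈ Z, (t : ℕ) < q) (hZne : Z.Nonempty)
    (hdisj : Disjoint Z (R ∪ C)) (k : ℕ) (hk : Z.card = k) :
    (sigmaP (interKappa m d1 d2 R C k) (interTensor m d1 d2 (coeffTensor A) Z R C hk) =
      sSup {x : ℝ | ∃ R' C' : Finset (Fin (q + 2)), Disjoint R' C' ∧ R' ∪ C' = Z ∧
        x = specNorm (flattenG (fun t => Fin (cdim q m d1 d2 t)) (coeffTensor A)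
          (R ∪ R') (C ∪ C'))}) ∧
    (vP (interKappa m d1 d2 R C k) (interTensor m d1 d2 (coeffTensor A) Z R C hk) =
      sSup {x : ℝ | ∃ R' C' : Finset (Fin (q + 2)), Disjoint R' C' ∧ R' ∪ C' = Z ∧
        R'.Nonempty ∧
        x = specNorm (flattenG (fun t => Fin (cdim q m d1 d2 t)) (coeffTensor A)
          R' (R ∪ C ∪ C'))}) ∧
    (rP (interKappa m d1 d2 R C k) (interTensor m d1 d2 (coeffTensor A) Z R C hk) =
      sSup {x : ℝ | ∃ R' C' : Finset (Fin (q + 2)), R' ∪ C' = Z ∧ (R' ∩ C').Nonempty ∧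
        x = specNorm (flattenG (fun t => Fin (cdim q m d1 d2 t)) (coeffTensor A)
          (R ∪ R') (C ∪ C'))}) := by
  have hpos : ∀ t, 0 < cdim q m d1 d2 t := by
    intro t; unfold cdim; split_ifs <;> assumption
  set 𝒜 := coeffTensor A with h𝒜
  refine ⟨?_, ?_, ?_⟩
  · -- sigma
    unfold sigmaP
    refine congrArg sSup (Set.ext fun x => ⟨?_, ?_⟩)
    · rintro ⟨Rt, Ct, hdis, huniv, hmu, hnu, rfl⟩
      have hnuRt : nuF k ∉ Rt := fun h => (Finset.disjoint_left.mp hdis h) hnu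
      have hmuCt : muF k ∉ Ct := fun h => (Finset.disjoint_left.mp hdis hmu) h
      refine ⟨primSet Z hk Rt, primSet Z hk Ct, primSet_disjoint Z hk hdis,
        by rw [← primSet_union, huniv, primSet_univ], ?_⟩
      rw [master_norm m d1 d2 Z R C hk hZq hpos 𝒜 Rt Ct,
        TSet_mu_only Z R C hk hmu hnuRt, TSet_nu_only Z R C hk hmuCt hnu]
    · rintro ⟨R', C', hdis, hunion, rfl⟩
      have hRZ : R' ⊆ Z := hunion ▸ Finset.subset_union_left
      have hCZ : C' ⊆ Z := hunion ▸ Finset.subset_union_right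
      have hnuRt := nu_not_mem_mu_preim Z hk R'
      have hmuCt := mu_not_mem_nu_preim Z hk C'
      have hmuRt : muF k ∈ ({muF k} : Finset (Fin (k + 2))) ∪ preim Z hk R' :=
        Finset.mem_union_left _ (Finset.mem_singleton_self _)
      have hnuCt : nuF k ∈ ({nuF k} : Finset (Fin (k + 2))) ∪ preim Z hk C' :=
        Finset.mem_union_left _ (Finset.mem_singleton_self _)
      have hReq : primSet Z hk (({muF k} : Finset (Fin (k + 2))) ∪ preim Z hk R') = R' := by
        rw [primSet_union, primSet_mu, primSet_preim Z hk hRZ, Finset.empty_union]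
      have hCeq : primSet Z hk (({nuF k} : Finset (Fin (k + 2))) ∪ preim Z hk C') = C' := by
        rw [primSet_union, primSet_nu, primSet_preim Z hk hCZ, Finset.empty_union]
      refine ⟨{muF k} ∪ preim Z hk R', {nuF k} ∪ preim Z hk C', ?_, ?_, hmuRt, hnuCt, ?_⟩
      · rw [Finset.disjoint_left]
        intro t ht hct
        rcases Finset.mem_union.mp ht with h1 | h1
        · rw [Finset.mem_singleton] at h1
          subst h1
          exact hmuCt hct
        · rcases Finset.mem_union.mp hct with h2 | h2
          · rw [Finset.mem_singleton] at h2
            subst h2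
            exact absurd (preim_lt Z hk h1) ((by omega : ¬ (k + 1 < k)))
          · obtain ⟨a, haR, rfl⟩ := (mem_preim Z hk).mp h1
            have haC := (castLE_mem_preim Z hk a).mp h2
            exact (Finset.disjoint_left.mp hdis haR) haC
      · exact cover_univ Z hk hunion _ _ Finset.subset_union_right
          Finset.subset_union_right (Finset.mem_union_left _ hmuRt)
          (Finset.mem_union_right _ hnuCt)
      · rw [master_norm m d1 d2 Z R C hk hZq hpos 𝒜,
          TSet_mu_only Z R C hk hmuRt hnuRt, TSet_nu_only Z R C hk hmuCt hnuCt,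
          hReq, hCeq]
  · -- v
    unfold vP
    refine congrArg sSup (Set.ext fun x => ⟨?_, ?_⟩)
    · rintro ⟨Rt, Ct, hdis, huniv, hmu, hnu, hne, rfl⟩
      have hmuRt : muF k ∉ Rt := fun h => (Finset.disjoint_left.mp hdis h) hmu
      have hnuRt : nuF k ∉ Rt := fun h => (Finset.disjoint_left.mp hdis h) hnu
      refine ⟨primSet Z hk Rt, primSet Z hk Ct, primSet_disjoint Z hk hdis,
        by rw [← primSet_union, huniv, primSet_univ], ?_, ?_⟩
      · obtain ⟨t, ht⟩ := hne
        have h1 : (t : ℕ) ≠ k := fun h => hmuRt ((Fin.ext h : t = muF k) ▸ ht)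
        have h2 : (t : ℕ) ≠ k + 1 := fun h => hnuRt ((Fin.ext h : t = nuF k) ▸ ht)
        have h3 : (t : ℕ) < k := by have := t.isLt; omega
        exact ⟨zmap Z hk ⟨t.1, h3⟩,
          (mem_primSet Z hk).mpr ⟨⟨t.1, h3⟩, (show _ ∈ Rt from ht), rfl⟩⟩
      · rw [master_norm m d1 d2 Z R C hk hZq hpos 𝒜 Rt Ct,
          TSet_none Z R C hk hmuRt hnuRt, TSet_both Z R C hk hmu hnu]
    · rintro ⟨R', C', hdis, hunion, hne, rfl⟩
      have hRZ : R' ⊆ Z := hunion ▸ Finset.subset_union_left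
      have hCZ : C' ⊆ Z := hunion ▸ Finset.subset_union_right
      set Ct : Finset (Fin (k + 2)) := {muF k} ∪ ({nuF k} ∪ preim Z hk C') with hCt
      have hmuCt : muF k ∈ Ct := Finset.mem_union_left _ (Finset.mem_singleton_self _)
      have hnuCt : nuF k ∈ Ct :=
        Finset.mem_union_right _ (Finset.mem_union_left _ (Finset.mem_singleton_self _))
      have hmuRt : muF k ∉ preim Z hk R' :=
        fun h => absurd (preim_lt Z hk h) ((by omega : ¬ (k < k)))
      have hnuRt : nuF k ∉ preim Z hk R' :=
        fun h => absurd (preim_lt Z hk h) ((by omega : ¬ (k + 1 < k)))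
      have hCeq : primSet Z hk Ct = C' := by
        rw [hCt, primSet_union, primSet_union, primSet_mu, primSet_nu,
          primSet_preim Z hk hCZ, Finset.empty_union, Finset.empty_union]
      refine ⟨preim Z hk R', Ct, ?_, ?_, hmuCt, hnuCt, ?_, ?_⟩
      · rw [Finset.disjoint_left]
        intro t ht hct
        have htlt := preim_lt Z hk ht
        rcases Finset.mem_union.mp hct with h1 | h1
        · rw [Finset.mem_singleton] at h1
          subst h1
          exact absurd htlt ((by omega : ¬ (k < k)))
        · rcases Finset.mem_union.mp h1 with h2 | h2
          · rw [Finset.mem_singleton] at h2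
            subst h2
            exact absurd htlt ((by omega : ¬ (k + 1 < k)))
          · obtain ⟨a, haR, rfl⟩ := (mem_preim Z hk).mp ht
            have haC := (castLE_mem_preim Z hk a).mp h2
            exact (Finset.disjoint_left.mp hdis haR) haC
      · exact cover_univ Z hk hunion _ _ (Finset.Subset.refl _)
          (Finset.Subset.trans Finset.subset_union_right Finset.subset_union_right)
          (Finset.mem_union_right _ hmuCt) (Finset.mem_union_right _ hnuCt)
      · obtain ⟨t, ht⟩ := hne
        have htZ : t ∈ Z := hRZ ht
        refine ⟨Fin.castLE (by omega) ((Z.orderIsoOfFin hk).symm ⟨t, htZ⟩),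
          (castLE_mem_preim Z hk _).mpr ?_⟩
        rw [zmap_symm Z hk htZ]
        exact ht
      · rw [master_norm m d1 d2 Z R C hk hZq hpos 𝒜,
          TSet_none Z R C hk hmuRt hnuRt, primSet_preim Z hk hRZ,
          TSet_both Z R C hk hmuCt hnuCt, hCeq]
  · -- r
    unfold rP
    refine congrArg sSup (Set.ext fun x => ⟨?_, ?_⟩)
    · rintro ⟨Rt, Ct, huniv, hmu, hnu, hinter, hltk, rfl⟩
      have hnuRt : nuF k ∉ Rt := fun h =>
        absurd (hltk (nuF k) (Finset.mem_inter.mpr ⟨h, hnu⟩)) ((by omega : ¬ (k + 1 < k)))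
      have hmuCt : muF k ∉ Ct := fun h =>
        absurd (hltk (muF k) (Finset.mem_inter.mpr ⟨hmu, h⟩)) ((by omega : ¬ (k < k)))
      refine ⟨primSet Z hk Rt, primSet Z hk Ct,
        by rw [← primSet_union, huniv, primSet_univ], ?_, ?_⟩
      · obtain ⟨t, ht⟩ := hinter
        have h3 : (t : ℕ) < k := hltk t ht
        refine ⟨zmap Z hk ⟨t.1, h3⟩, Finset.mem_inter.mpr ⟨?_, ?_⟩⟩
        · exact (mem_primSet Z hk).mpr
            ⟨⟨t.1, h3⟩, (show _ ∈ Rt from (Finset.mem_inter.mp ht).1), rfl⟩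
        · exact (mem_primSet Z hk).mpr
            ⟨⟨t.1, h3⟩, (show _ ∈ Ct from (Finset.mem_inter.mp ht).2), rfl⟩
      · rw [master_norm m d1 d2 Z R C hk hZq hpos 𝒜 Rt Ct,
          TSet_mu_only Z R C hk hmu hnuRt, TSet_nu_only Z R C hk hmuCt hnu]
    · rintro ⟨R', C', hunion, hinter, rfl⟩
      have hRZ : R' ⊆ Z := hunion ▸ Finset.subset_union_left
      have hCZ : C' ⊆ Z := hunion ▸ Finset.subset_union_right
      have hnuRt := nu_not_mem_mu_preim Z hk R'
      have hmuCt := mu_not_mem_nu_preim Z hk C'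
      have hmuRt : muF k ∈ ({muF k} : Finset (Fin (k + 2))) ∪ preim Z hk R' :=
        Finset.mem_union_left _ (Finset.mem_singleton_self _)
      have hnuCt : nuF k ∈ ({nuF k} : Finset (Fin (k + 2))) ∪ preim Z hk C' :=
        Finset.mem_union_left _ (Finset.mem_singleton_self _)
      have hReq : primSet Z hk (({muF k} : Finset (Fin (k + 2))) ∪ preim Z hk R') = R' := by
        rw [primSet_union, primSet_mu, primSet_preim Z hk hRZ, Finset.empty_union]
      have hCeq : primSet Z hk (({nuF k} : Finset (Fin (k + 2))) ∪ preim Z hk C') = C' := by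
        rw [primSet_union, primSet_nu, primSet_preim Z hk hCZ, Finset.empty_union]
      refine ⟨{muF k} ∪ preim Z hk R', {nuF k} ∪ preim Z hk C', ?_, hmuRt, hnuCt, ?_, ?_, ?_⟩
      · exact cover_univ Z hk hunion _ _ Finset.subset_union_right
          Finset.subset_union_right (Finset.mem_union_left _ hmuRt)
          (Finset.mem_union_right _ hnuCt)
      · obtain ⟨t, ht⟩ := hinter
        have htR := (Finset.mem_inter.mp ht).1
        have htC := (Finset.mem_inter.mp ht).2
        have htZ : t ∈ Z := hRZ htR
        refine ⟨Fin.castLE (by omega) ((Z.orderIsoOfFin hk).symm ⟨t, htZ⟩),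
          Finset.mem_inter.mpr ⟨Finset.mem_union_right _ ?_, Finset.mem_union_right _ ?_⟩⟩
        · exact (castLE_mem_preim Z hk _).mpr (by rw [zmap_symm Z hk htZ]; exact htR)
        · exact (castLE_mem_preim Z hk _).mpr (by rw [zmap_symm Z hk htZ]; exact htC)
      · intro t htt
        have h1 := (Finset.mem_inter.mp htt).1
        have h2 := (Finset.mem_inter.mp htt).2
        rcases Finset.mem_union.mp h1 with hs | hp
        · rw [Finset.mem_singleton] at hs
          subst hs
          exact absurd h2 hmuCt
        · exact preim_lt Z hk hp
      · rw [master_norm m d1 d2 Z R C hk hZq hpos 𝒜,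
          TSet_mu_only Z R C hk hmuRt hnuRt, TSet_nu_only Z R C hk hmuCt hnuCt,
          hReq, hCeq]

end
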